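/- Let n ∈ ℕ and A : Matrix (Fin n) (Fin n) ℂ. For each i : Fin n set λ_i := A i i, r_i := ∑_{j ≠ i} |A i j|, and D_i := Metric.closedBall λ_i r_i ⊆ ℂ. Let S : Finset (Fin n) be such that (⋃_{i ∈ S} D_i) ∩ (⋃_{i ∉ S} D_i) = ∅. Then the number of roots of the characteristic polynomial of A lying in ⋃_{i ∈ S} D_i, counted with multiplicity, equals S.card; that is, (A.charpoly.roots.filter (fun z => z ∈ ⋃_{i ∈ S} D_i)).card = S.card. -/

import Mathlib

open Polynomial

namespace GershgorinCounting

lemma eval_charpoly' {m : Type*} [Fintype m] [DecidableEq m]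
    (M : Matrix m m ℂ) (z : ℂ) :
    M.charpoly.eval z = (z • (1 : Matrix m m ℂ) - M).det := by
  rw [Matrix.charpoly]
  show (evalRingHom z) _ = _
  rw [RingHom.map_det]
  congr 1
  ext i j
  by_cases h : i = j
  · subst h
    simp [Matrix.charmatrix_apply_eq, Matrix.one_apply]
  · simp [Matrix.charmatrix_apply_ne _ _ _ h, Matrix.one_apply, h]

lemma exists_fn {α : Type*} {m : ℕ} (μ : Multiset α) (h : Multiset.card μ = m) :
    ∃ w : Fin m → α, μ = Multiset.map w Finset.univ.val := by
  obtain ⟨l, rfl⟩ : ∃ l : List α, μ = ↑l := ⟨μ.toList, (Multiset.coe_toList μ).symm⟩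
  rw [Multiset.coe_card] at h
  subst h
  refine ⟨l.get, ?_⟩
  have huniv : (Finset.univ.val : Multiset (Fin l.length)) = ↑(List.finRange l.length) := rfl
  rw [huniv, Multiset.map_coe, ← List.ofFn_eq_map, List.ofFn_get]

lemma root_mem {m : Type*} [Fintype m] [DecidableEq m] (M : Matrix m m ℂ) {z : ℂ}
    (hz : z ∈ M.charpoly.roots) :
    ∃ k, z ∈ Metric.closedBall (M k k) (∑ j ∈ Finset.univ.erase k, ‖M k j‖) := by
  by_contra h
  push_neg at h
  have hroot : M.charpoly.eval z = 0 := (Polynomial.isRoot_of_mem_roots hz)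
  rw [eval_charpoly'] at hroot
  refine det_ne_zero_of_sum_row_lt_diag (A := z • (1 : Matrix m m ℂ) - M) (fun k => ?_) hroot
  have hk := h k
  rw [Metric.mem_closedBall, not_le] at hk
  calc ∑ j ∈ Finset.univ.erase k, ‖(z • (1 : Matrix m m ℂ) - M) k j‖
      = ∑ j ∈ Finset.univ.erase k, ‖M k j‖ := by
        refine Finset.sum_congr rfl fun j hj => ?_
        have hjk : k ≠ j := (Finset.ne_of_mem_erase hj).symm
        simp [Matrix.sub_apply, Matrix.smul_apply, Matrix.one_apply, hjk]
    _ < ‖(z • (1 : Matrix m m ℂ) - M) k k‖ := by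
        simpa [Matrix.sub_apply, Matrix.smul_apply, Matrix.one_apply, dist_eq_norm] using hk

lemma count_filter_map {n : ℕ} (g : Fin n → ℂ) (U : Set ℂ) [DecidablePred (· ∈ U)] :
    Multiset.card ((Multiset.map g Finset.univ.val).filter (· ∈ U)) =
      (Finset.univ.filter fun i => g i ∈ U).card := by
  rw [← Multiset.countP_eq_card_filter, Multiset.countP_map]
  rfl

end GershgorinCounting

open Classical in
/-- Counting version of the Gershgorin circle theorem: if the union of the Gershgorin disks
indexed by a set `S` is disjoint from the union of the remaining disks, then it contains
exactly `S.card` eigenvalues (roots of the characteristic polynomial) counted with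
algebraic multiplicity. -/
theorem gershgorin_counting
    (n : ℕ) (A : Matrix (Fin n) (Fin n) ℂ) (S : Finset (Fin n))
    (hdisj :
      (⋃ i ∈ S, Metric.closedBall (A i i) (∑ j ∈ Finset.univ.erase i, ‖A i j‖)) ∩
        (⋃ i ∈ Finset.univ \ S,
          Metric.closedBall (A i i) (∑ j ∈ Finset.univ.erase i, ‖A i j‖)) = ∅) :
    (A.charpoly.roots.filter
        (fun z : ℂ =>
          z ∈ ⋃ i ∈ S,
            Metric.closedBall (A i i) (∑ j ∈ Finset.univ.erase i, ‖A i j‖))).card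
      = S.card := by
  classical
  set U : Set ℂ :=
    ⋃ i ∈ S, Metric.closedBall (A i i) (∑ j ∈ Finset.univ.erase i, ‖A i j‖) with hUdef
  set V : Set ℂ :=
    ⋃ i ∈ Finset.univ \ S,
      Metric.closedBall (A i i) (∑ j ∈ Finset.univ.erase i, ‖A i j‖) with hVdef
  have hUc : IsCompact U := S.isCompact_biUnion fun i _ => isCompact_closedBall _ _
  have hVc : IsCompact V :=
    (Finset.univ \ S).isCompact_biUnion fun i _ => isCompact_closedBall _ _
  have hdisj' : Disjoint U V := Set.disjoint_iff_inter_eq_empty.mpr hdisj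
  obtain ⟨δ, hδpos, hδ⟩ := hdisj'.exists_thickenings hUc hVc.isClosed
  -- two points within δ on the same side
  have hsame : ∀ x y : ℂ, dist x y < δ → x ∈ U ∪ V → y ∈ U ∪ V → (x ∈ U ↔ y ∈ U) := by
    intro x y hxy hx hy
    have cross1 : x ∈ U → y ∈ V → False := by
      intro hxU hyV
      have h1 : x ∈ Metric.thickening δ U := Metric.self_subset_thickening hδpos U hxU
      have h2 : x ∈ Metric.thickening δ V := Metric.mem_thickening_iff.mpr ⟨y, hyV, hxy⟩
      exact Set.disjoint_left.mp hδ h1 h2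
    have cross2 : y ∈ U → x ∈ V → False := by
      intro hyU hxV
      have h1 : y ∈ Metric.thickening δ U := Metric.self_subset_thickening hδpos U hyU
      have h2 : y ∈ Metric.thickening δ V :=
        Metric.mem_thickening_iff.mpr ⟨x, hxV, by rwa [dist_comm]⟩
      exact Set.disjoint_left.mp hδ h1 h2
    constructor
    · intro hxU
      rcases hy with hyU | hyV
      · exact hyU
      · exact absurd (cross1 hxU hyV) not_false
    · intro hyU
      rcases hx with hxU | hxV
      · exact hxU
      · exact absurd (cross2 hyU hxV) not_false
  -- the interpolating family of matrices
  set M : ℝ → Matrix (Fin n) (Fin n) ℂ :=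
    fun t => Matrix.of fun i j => if i = j then A i i else (t : ℂ) * A i j with hMdef
  set p : ℝ → Polynomial ℂ := fun t => (M t).charpoly with hpdef
  have hM1 : M 1 = A := by
    ext i j
    by_cases h : i = j <;> simp [hMdef, h]
  have hcard : ∀ t, Multiset.card (p t).roots = n := by
    intro t
    rw [hpdef]
    rw [Polynomial.splits_iff_card_roots.mp (IsAlgClosed.splits _)]
    simp
  have hloc : ∀ t ∈ Set.Icc (0:ℝ) 1, ∀ z ∈ (p t).roots, z ∈ U ∪ V := by
    intro t ht z hz
    obtain ⟨k, hk⟩ := GershgorinCounting.root_mem (M t) hz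
    have hkk : (M t) k k = A k k := by simp [hMdef]
    have hsub : Metric.closedBall ((M t) k k) (∑ j ∈ Finset.univ.erase k, ‖(M t) k j‖)
        ⊆ Metric.closedBall (A k k) (∑ j ∈ Finset.univ.erase k, ‖A k j‖) := by
      rw [hkk]
      refine Metric.closedBall_subset_closedBall (Finset.sum_le_sum fun j hj => ?_)
      have hkj : k ≠ j := (Finset.ne_of_mem_erase hj).symm
      have hMe : (M t) k j = (t : ℂ) * A k j := by simp [hMdef, hkj]
      rw [hMe, norm_mul]
      calc ‖(t : ℂ)‖ * ‖A k j‖ ≤ 1 * ‖A k j‖ := by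
            refine mul_le_mul_of_nonneg_right ?_ (norm_nonneg _)
            rw [Complex.norm_real, Real.norm_eq_abs, abs_of_nonneg ht.1]
            exact ht.2
        _ = ‖A k j‖ := one_mul _
    have hz' := hsub hk
    by_cases hkS : k ∈ S
    · exact Or.inl (Set.mem_iUnion₂.mpr ⟨k, hkS, hz'⟩)
    · exact Or.inr (Set.mem_iUnion₂.mpr ⟨k, by simp [hkS], hz'⟩)
  set f : ℝ → ℕ := fun t => Multiset.card ((p t).roots.filter (· ∈ U)) with hfdef
  -- continuity of evaluations
  have hMc : Continuous M := by
    refine continuous_matrix fun i j => ?_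
    by_cases h : i = j
    · simpa [hMdef, h] using (continuous_const : Continuous fun _ : ℝ => A i i)
    · simpa [hMdef, h] using (by fun_prop :
        Continuous fun t : ℝ => (t : ℂ) * A i j)
  have hevalc : ∀ z : ℂ, Continuous fun s : ℝ => (p s).eval z := by
    intro z
    have h1 : Continuous fun s : ℝ => (z • (1 : Matrix (Fin n) (Fin n) ℂ) - M s).det :=
      (continuous_const.sub hMc).matrix_det
    exact h1.congr fun s => (GershgorinCounting.eval_charpoly' (M s) z).symm
  -- key subsequence lemma
  have hkey : ∀ t ∈ Set.Icc (0:ℝ) 1, ∀ u : ℕ → ℝ, (∀ k, u k ∈ Set.Icc (0:ℝ) 1) →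
      Filter.Tendsto u Filter.atTop (nhds t) →
      ∃ φ : ℕ → ℕ, StrictMono φ ∧ ∀ᶠ k in Filter.atTop, f (u (φ k)) = f t := by
    intro t ht u hu htu
    have hv : ∀ k, ∃ w : Fin n → ℂ, (p (u k)).roots = Multiset.map w Finset.univ.val :=
      fun k => GershgorinCounting.exists_fn _ (hcard (u k))
    choose v hv using hv
    have hvmem : ∀ k i, v k i ∈ U ∪ V := by
      intro k i
      refine hloc (u k) (hu k) _ ?_
      rw [hv k]
      exact Multiset.mem_map.mpr ⟨i, Finset.mem_univ_val _, rfl⟩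
    have hKc : IsCompact (Set.pi Set.univ fun _ : Fin n => U ∪ V) :=
      isCompact_univ_pi fun _ => hUc.union hVc
    obtain ⟨w, hwmem, φ, hφ, hconv⟩ := hKc.tendsto_subseq (x := v)
      (fun k => Set.mem_univ_pi.mpr fun i => hvmem k i)
    have hwUV : ∀ i, w i ∈ U ∪ V := fun i => Set.mem_univ_pi.mp hwmem i
    have htuφ : Filter.Tendsto (fun k => u (φ k)) Filter.atTop (nhds t) :=
      htu.comp hφ.tendsto_atTop
    have hwcoord : ∀ i, Filter.Tendsto (fun k => v (φ k) i) Filter.atTop (nhds (w i)) :=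
      fun i => ((continuous_apply i).tendsto w).comp hconv
    -- identify the limit polynomial
    have hpt : p t = ∏ i : Fin n, (X - C (w i)) := by
      refine Polynomial.funext fun z => ?_
      have h1 : Filter.Tendsto (fun k => (p (u (φ k))).eval z) Filter.atTop
          (nhds ((p t).eval z)) := ((hevalc z).tendsto t).comp htuφ
      have h2 : ∀ k, (p (u (φ k))).eval z = ∏ i : Fin n, (z - v (φ k) i) := by
        intro k
        have hmon : (p (u (φ k))).Monic := Matrix.charpoly_monic _
        have heq := (IsAlgClosed.splits (p (u (φ k)))).eq_prod_roots_of_monic hmon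
        rw [hv (φ k)] at heq
        rw [heq, Polynomial.eval_multiset_prod, Multiset.map_map, Multiset.map_map]
        rw [Finset.prod]
        congr 1
        ext i
        simp
      simp only [h2] at h1
      have h3 : Filter.Tendsto (fun k => ∏ i : Fin n, (z - v (φ k) i)) Filter.atTop
          (nhds (∏ i : Fin n, (z - w i))) :=
        tendsto_finset_prod _ fun i _ => tendsto_const_nhds.sub (hwcoord i)
      have h4 := tendsto_nhds_unique h1 h3
      rw [h4, Polynomial.eval_prod]
      simp
    have hptroots : (p t).roots = Multiset.map w Finset.univ.val := by
      rw [hpt]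
      have h5 : (∏ i : Fin n, (X - C (w i))) =
          ((Multiset.map w Finset.univ.val).map fun a => X - C a).prod := by
        rw [Multiset.map_map]
        rfl
      rw [h5, Polynomial.roots_multiset_prod_X_sub_C]
    refine ⟨φ, hφ, ?_⟩
    have hUViff : ∀ i, ∀ᶠ k in Filter.atTop, (v (φ k) i ∈ U ↔ w i ∈ U) := by
      intro i
      filter_upwards [Metric.tendsto_nhds.mp (hwcoord i) δ hδpos] with k hk
      exact hsame _ _ hk (hvmem (φ k) i) (hwUV i)
    filter_upwards [Filter.eventually_all.mpr hUViff] with k hk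
    have e1 : f (u (φ k)) = (Finset.univ.filter fun i => v (φ k) i ∈ U).card := by
      rw [hfdef]
      simp only []
      rw [hv (φ k), GershgorinCounting.count_filter_map]
    have e2 : f t = (Finset.univ.filter fun i => w i ∈ U).card := by
      rw [hfdef]
      simp only []
      rw [hptroots, GershgorinCounting.count_filter_map]
    rw [e1, e2]
    congr 1
    exact Finset.filter_congr fun i _ => by rw [hk i]
  -- computation at t = 0
  have hf0 : f 0 = S.card := by
    have hp0 : p 0 = ∏ i : Fin n, (X - C (A i i)) := by
      refine Polynomial.funext fun z => ?_
      rw [hpdef]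
      simp only []
      rw [GershgorinCounting.eval_charpoly']
      have hM0 : z • (1 : Matrix (Fin n) (Fin n) ℂ) - M 0 =
          Matrix.diagonal fun i => z - A i i := by
        ext i j
        by_cases h : i = j
        · subst h
          simp [hMdef, Matrix.one_apply, Matrix.diagonal]
        · simp [hMdef, Matrix.one_apply, Matrix.diagonal, h]
      rw [hM0, Matrix.det_diagonal, Polynomial.eval_prod]
      simp
    have hroots0 : (p 0).roots = Multiset.map (fun i => A i i) Finset.univ.val := by
      rw [hp0]
      have h5 : (∏ i : Fin n, (X - C (A i i))) =
          ((Multiset.map (fun i => A i i) Finset.univ.val).map fun a => X - C a).prod := by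
        rw [Multiset.map_map]
        rfl
      rw [h5, Polynomial.roots_multiset_prod_X_sub_C]
    have hiU : ∀ i : Fin n, (A i i ∈ U) ↔ i ∈ S := by
      intro i
      have hself : A i i ∈ Metric.closedBall (A i i) (∑ j ∈ Finset.univ.erase i, ‖A i j‖) :=
        Metric.mem_closedBall_self (Finset.sum_nonneg fun j _ => norm_nonneg _)
      constructor
      · intro hU'
        by_contra hiS
        have hiV : A i i ∈ V := Set.mem_iUnion₂.mpr ⟨i, by simp [hiS], hself⟩
        have : A i i ∈ U ∩ V := ⟨hU', hiV⟩
        rw [hdisj] at this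
        exact Set.notMem_empty _ this
      · intro hiS
        exact Set.mem_iUnion₂.mpr ⟨i, hiS, hself⟩
    rw [hfdef]
    simp only []
    rw [hroots0, GershgorinCounting.count_filter_map]
    rw [Finset.filter_congr fun i _ => by rw [hiU i]]
    simp
  -- connectedness argument
  set T1 : Set ℝ := Set.Icc (0:ℝ) 1 ∩ {t | f t = S.card} with hT1def
  set T2 : Set ℝ := Set.Icc (0:ℝ) 1 ∩ {t | f t ≠ S.card} with hT2def
  have hT1c : IsClosed T1 := by
    refine IsSeqClosed.isClosed ?_
    intro x a hx hxa
    have haI : a ∈ Set.Icc (0:ℝ) 1 := isClosed_Icc.isSeqClosed (fun k => (hx k).1) hxa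
    obtain ⟨φ, hφ, hev⟩ := hkey a haI x (fun k => (hx k).1) hxa
    obtain ⟨k, hk⟩ := hev.exists
    exact ⟨haI, by rw [Set.mem_setOf_eq, ← hk]; exact (hx (φ k)).2⟩
  have hT2c : IsClosed T2 := by
    refine IsSeqClosed.isClosed ?_
    intro x a hx hxa
    have haI : a ∈ Set.Icc (0:ℝ) 1 := isClosed_Icc.isSeqClosed (fun k => (hx k).1) hxa
    obtain ⟨φ, hφ, hev⟩ := hkey a haI x (fun k => (hx k).1) hxa
    obtain ⟨k, hk⟩ := hev.exists
    exact ⟨haI, by rw [Set.mem_setOf_eq, ← hk]; exact (hx (φ k)).2⟩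
  have hcover : Set.Icc (0:ℝ) 1 ⊆ T1 ∪ T2 := by
    intro t ht
    by_cases h : f t = S.card
    · exact Or.inl ⟨ht, h⟩
    · exact Or.inr ⟨ht, h⟩
  have hdisjT : Disjoint T1 T2 := by
    rw [Set.disjoint_left]
    rintro t ⟨_, h1⟩ ⟨_, h2⟩
    exact h2 h1
  have hone : (1 : ℝ) ∈ T1 := by
    rcases (isPreconnected_iff_subset_of_fully_disjoint_closed isClosed_Icc).mp
        isPreconnected_Icc T1 T2 hT1c hT2c hcover hdisjT with hsub | hsub
    · exact hsub ⟨zero_le_one, le_refl 1⟩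
    · exact absurd ((hsub ⟨le_refl 0, zero_le_one⟩).2 hf0) not_false
  have hgoal : A.charpoly = p 1 := by
    rw [hpdef]
    simp only []
    rw [hM1]
  rw [hgoal]
  exact hone.2
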